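/- arXiv:2605.12174 — 3 statements merged into one kernel-verified Lean document; each statement's English description precedes it below -/
import Mathlib

section
/- Let μ, ν be probability measures on ℝ^d with finite second moments, and let π be any coupling of μ and ν. Then W₂(π, π*) ≥ (1/√2)·( (∫ ‖x−y‖² dπ(x,y))^{1/2} − W₂(μ,ν) ), where π* is any optimal transport plan between μ and ν for the quadratic cost, and W₂(π, π*) is the 2-Wasserstein distance between π and π* as measures on ℝ^d × ℝ^d. -/
open MeasureTheory ProbabilityTheory Real Filter
open scoped ENNReal

/-- `π` is a coupling of `μ` and `ν`. -/
def IsCoupling {E F : Type*} [MeasurableSpace E] [MeasurableSpace F]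
    (pl : Measure (E × F)) (μ : Measure E) (ν : Measure F) : Prop :=
  pl.map Prod.fst = μ ∧ pl.map Prod.snd = ν

/-- Optimal transport cost for cost function `c`. -/
noncomputable def Wcost {E F : Type*} [MeasurableSpace E] [MeasurableSpace F]
    (c : E → F → ℝ) (μ : Measure E) (ν : Measure F) : ℝ :=
  sInf {r : ℝ | ∃ pl : Measure (E × F), IsProbabilityMeasure pl ∧ IsCoupling pl μ ν ∧
    r = ∫ p, c p.1 p.2 ∂pl}

/-- Squared 2-Wasserstein distance. -/
noncomputable def W2sq {E : Type*} [MeasurableSpace E] [PseudoMetricSpace E]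
    (μ ν : Measure E) : ℝ :=
  Wcost (fun x y => dist x y ^ 2) μ ν

/-- 2-Wasserstein distance. -/
noncomputable def W2 {E : Type*} [MeasurableSpace E] [PseudoMetricSpace E]
    (μ ν : Measure E) : ℝ := Real.sqrt (W2sq μ ν)

/-- Squared 2-Wasserstein distance between measures on a product space,
for the L² product metric `‖(x,y)‖² = ‖x‖² + ‖y‖²`. -/
noncomputable def W2sqProd {E F : Type*} [MeasurableSpace E] [PseudoMetricSpace E]
    [MeasurableSpace F] [PseudoMetricSpace F]
    (pl pl' : Measure (E × F)) : ℝ :=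
  Wcost (fun p q => dist p.1 q.1 ^ 2 + dist p.2 q.2 ^ 2) pl pl'

/-- 2-Wasserstein distance between measures on a product space (L² product metric). -/
noncomputable def W2Prod {E F : Type*} [MeasurableSpace E] [PseudoMetricSpace E]
    [MeasurableSpace F] [PseudoMetricSpace F]
    (pl pl' : Measure (E × F)) : ℝ := Real.sqrt (W2sqProd pl pl')

/-- Minkowski's inequality in L² form for real integrals. -/
lemma minkowski2 {α : Type*} [MeasurableSpace α] {P : Measure α} {u v : α → ℝ}
    (hu : AEStronglyMeasurable u P) (hv : AEStronglyMeasurable v P)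
    (hu2 : Integrable (fun x => u x ^ 2) P) (hv2 : Integrable (fun x => v x ^ 2) P) :
    Real.sqrt (∫ x, (u x + v x) ^ 2 ∂P) ≤
      Real.sqrt (∫ x, u x ^ 2 ∂P) + Real.sqrt (∫ x, v x ^ 2 ∂P) := by
  have hU : MemLp u 2 P := (memLp_two_iff_integrable_sq hu).2 hu2
  have hV : MemLp v 2 P := (memLp_two_iff_integrable_sq hv).2 hv2
  have hUV : MemLp (u + v) 2 P := hU.add hV
  have h := eLpNorm_add_le hu hv (by norm_num : (1:ℝ≥0∞) ≤ 2)
  have e : ∀ (f : α → ℝ), MemLp f 2 P →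
      eLpNorm f 2 P = ENNReal.ofReal (Real.sqrt (∫ x, f x ^ 2 ∂P)) := by
    intro f hf
    rw [hf.eLpNorm_eq_integral_rpow_norm two_ne_zero ENNReal.ofNat_ne_top]
    congr 1
    have h2 : (∫ a, ‖f a‖ ^ (2:ℝ≥0∞).toReal ∂P) = ∫ x, f x ^ 2 ∂P := by
      apply integral_congr_ae; filter_upwards with x
      rw [ENNReal.toReal_ofNat, show ((2:ℝ)) = ((2:ℕ):ℝ) by norm_num, Real.rpow_natCast]
      simp [sq_abs]
    rw [h2, Real.sqrt_eq_rpow]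
    norm_num
  rw [e _ hUV, e _ hU, e _ hV, ← ENNReal.ofReal_add (Real.sqrt_nonneg _) (Real.sqrt_nonneg _)] at h
  exact (ENNReal.ofReal_le_ofReal_iff (by positivity)).1 (by simpa using h)

lemma distsq_le {E : Type*} [NormedAddCommGroup E] (a b : E) :
    dist a b ^ 2 ≤ 2 * ‖a‖ ^ 2 + 2 * ‖b‖ ^ 2 := by
  have h1 : dist a b ≤ ‖a‖ + ‖b‖ := by rw [dist_eq_norm]; exact norm_sub_le a b
  nlinarith [dist_nonneg (x := a) (y := b), norm_nonneg a, norm_nonneg b, sq_nonneg (‖a‖ - ‖b‖)]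

/-- Lower bound on the Wasserstein distance between a coupling and an optimal plan
in terms of the excess transport cost. -/
theorem plan_distance_lower_bound (d : ℕ)
    (μ ν : Measure (EuclideanSpace ℝ (Fin d)))
    [IsProbabilityMeasure μ] [IsProbabilityMeasure ν]
    (hμ : Integrable (fun x => ‖x‖ ^ 2) μ) (hν : Integrable (fun x => ‖x‖ ^ 2) ν)
    (pl plstar : Measure (EuclideanSpace ℝ (Fin d) × EuclideanSpace ℝ (Fin d)))
    [IsProbabilityMeasure pl] [IsProbabilityMeasure plstar]
    (hpl : IsCoupling pl μ ν) (hplstar : IsCoupling plstar μ ν)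
    (hopt : ∫ p, dist p.1 p.2 ^ 2 ∂plstar = W2sq μ ν) :
    W2Prod pl plstar ≥
      (1 / Real.sqrt 2) * (Real.sqrt (∫ p, dist p.1 p.2 ^ 2 ∂pl) - W2 μ ν) := by
  classical
  set E := EuclideanSpace ℝ (Fin d) with hE
  set A2 := ∫ p, dist p.1 p.2 ^ 2 ∂pl with hA2
  set B2 := ∫ p, dist p.1 p.2 ^ 2 ∂plstar with hB2
  have hB2nn : 0 ≤ B2 := integral_nonneg fun p => by positivity
  have hW2 : W2 μ ν = Real.sqrt B2 := by rw [W2, ← hopt]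
  rw [hW2]
  by_cases hc : Real.sqrt A2 - Real.sqrt B2 ≤ 0
  · have h1 : (1 / Real.sqrt 2) * (Real.sqrt A2 - Real.sqrt B2) ≤ 0 :=
      mul_nonpos_of_nonneg_of_nonpos (by positivity) hc
    exact le_trans h1 (Real.sqrt_nonneg _)
  push_neg at hc
  set c := (1 / Real.sqrt 2) * (Real.sqrt A2 - Real.sqrt B2) with hcdef
  have hs2 : (0:ℝ) < Real.sqrt 2 := by positivity
  have hcnn : 0 ≤ c := le_of_lt (by positivity)
  -- the set of costs of couplings of pl and plstar
  have hbound : ∀ r ∈ {r : ℝ | ∃ Q : Measure ((E × E) × (E × E)),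
      IsProbabilityMeasure Q ∧ IsCoupling Q pl plstar ∧
      r = ∫ p, (dist p.1.1 p.2.1 ^ 2 + dist p.1.2 p.2.2 ^ 2) ∂Q}, c ^ 2 ≤ r := by
    rintro r ⟨Q, hQp, ⟨hQ1, hQ2⟩, rfl⟩
    haveI := hQp
    have m11 : Measurable (fun ω : (E × E) × (E × E) => ω.1.1) := measurable_fst.fst
    have m12 : Measurable (fun ω : (E × E) × (E × E) => ω.1.2) := measurable_fst.snd
    have m21 : Measurable (fun ω : (E × E) × (E × E) => ω.2.1) := measurable_snd.fst
    have m22 : Measurable (fun ω : (E × E) × (E × E) => ω.2.2) := measurable_snd.snd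
    -- marginals of Q on each coordinate
    have q11 : Q.map (fun ω : (E × E) × (E × E) => ω.1.1) = μ := by
      rw [show (fun ω : (E × E) × (E × E) => ω.1.1) = Prod.fst ∘ Prod.fst from rfl,
        ← Measure.map_map measurable_fst measurable_fst, hQ1, hpl.1]
    have q12 : Q.map (fun ω : (E × E) × (E × E) => ω.1.2) = ν := by
      rw [show (fun ω : (E × E) × (E × E) => ω.1.2) = Prod.snd ∘ Prod.fst from rfl,
        ← Measure.map_map measurable_snd measurable_fst, hQ1, hpl.2]
    have q21 : Q.map (fun ω : (E × E) × (E × E) => ω.2.1) = μ := by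
      rw [show (fun ω : (E × E) × (E × E) => ω.2.1) = Prod.fst ∘ Prod.snd from rfl,
        ← Measure.map_map measurable_fst measurable_snd, hQ2, hplstar.1]
    have q22 : Q.map (fun ω : (E × E) × (E × E) => ω.2.2) = ν := by
      rw [show (fun ω : (E × E) × (E × E) => ω.2.2) = Prod.snd ∘ Prod.snd from rfl,
        ← Measure.map_map measurable_snd measurable_snd, hQ2, hplstar.2]
    -- integrability of squared norms of coordinates
    have key : ∀ (T : (E × E) × (E × E) → E), Measurable T → ∀ (m : Measure E),
        Q.map T = m → Integrable (fun x => ‖x‖ ^ 2) m →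
        Integrable (fun ω => ‖T ω‖ ^ 2) Q := by
      intro T hT m hm hint
      rw [← hm] at hint
      exact (integrable_map_measure ((measurable_norm.pow_const 2).aestronglyMeasurable)
        hT.aemeasurable).1 hint
    have i11 : Integrable (fun ω : (E × E) × (E × E) => ‖ω.1.1‖ ^ 2) Q := key _ m11 μ q11 hμ
    have i12 : Integrable (fun ω : (E × E) × (E × E) => ‖ω.1.2‖ ^ 2) Q := key _ m12 ν q12 hν
    have i21 : Integrable (fun ω : (E × E) × (E × E) => ‖ω.2.1‖ ^ 2) Q := key _ m21 μ q21 hμ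
    have i22 : Integrable (fun ω : (E × E) × (E × E) => ‖ω.2.2‖ ^ 2) Q := key _ m22 ν q22 hν
    -- integrability of squared distances
    have key2 : ∀ (T S : (E × E) × (E × E) → E), Measurable T → Measurable S →
        Integrable (fun ω => ‖T ω‖ ^ 2) Q → Integrable (fun ω => ‖S ω‖ ^ 2) Q →
        Integrable (fun ω => dist (T ω) (S ω) ^ 2) Q := by
      intro T S hT hS hTi hSi
      refine ((hTi.const_mul 2).add (hSi.const_mul 2)).mono'
        (((hT.dist hS).pow_const 2).aestronglyMeasurable) ?_
      filter_upwards with ω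
      rw [Real.norm_eq_abs, abs_of_nonneg (by positivity)]
      exact distsq_le _ _
    have hIf1 : Integrable (fun ω : (E × E) × (E × E) => dist ω.1.1 ω.2.1 ^ 2) Q :=
      key2 _ _ m11 m21 i11 i21
    have hIf2 : Integrable (fun ω : (E × E) × (E × E) => dist ω.2.1 ω.2.2 ^ 2) Q :=
      key2 _ _ m21 m22 i21 i22
    have hIf3 : Integrable (fun ω : (E × E) × (E × E) => dist ω.1.2 ω.2.2 ^ 2) Q :=
      key2 _ _ m12 m22 i12 i22
    have hIh : Integrable (fun ω : (E × E) × (E × E) => dist ω.1.1 ω.1.2 ^ 2) Q :=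
      key2 _ _ m11 m12 i11 i12
    -- u = f1 + f3, v = f2
    set u : (E × E) × (E × E) → ℝ := fun ω => dist ω.1.1 ω.2.1 + dist ω.1.2 ω.2.2 with hu
    set v : (E × E) × (E × E) → ℝ := fun ω => dist ω.2.1 ω.2.2 with hv
    have hum : AEStronglyMeasurable u Q :=
      ((m11.dist m21).add (m12.dist m22)).aestronglyMeasurable
    have hvm : AEStronglyMeasurable v Q := (m21.dist m22).aestronglyMeasurable
    have hIu : Integrable (fun ω => u ω ^ 2) Q := by
      refine ((hIf1.const_mul 2).add (hIf3.const_mul 2)).mono'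
        (hum.pow 2) ?_
      filter_upwards with ω
      rw [Real.norm_eq_abs, abs_of_nonneg (by positivity)]
      simp only [Pi.add_apply, hu]
      nlinarith [sq_nonneg (dist ω.1.1 ω.2.1 - dist ω.1.2 ω.2.2)]
    have hIv : Integrable (fun ω => v ω ^ 2) Q := hIf2
    have hIuv : Integrable (fun ω => (u ω + v ω) ^ 2) Q := by
      refine ((hIu.const_mul 2).add (hIv.const_mul 2)).mono'
        ((hum.add hvm).pow 2) ?_
      filter_upwards with ω
      rw [Real.norm_eq_abs, abs_of_nonneg (by positivity)]
      simp only [Pi.add_apply]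
      nlinarith [sq_nonneg (u ω - v ω)]
    -- pointwise triangle inequality
    have ptwise : ∀ ω : (E × E) × (E × E), dist ω.1.1 ω.1.2 ≤ u ω + v ω := by
      intro ω
      have h4 := dist_triangle4 ω.1.1 ω.2.1 ω.2.2 ω.1.2
      have hcm : dist ω.2.2 ω.1.2 = dist ω.1.2 ω.2.2 := dist_comm _ _
      simp only [hu, hv]
      linarith
    -- integral identities
    have IA : A2 = ∫ ω, dist ω.1.1 ω.1.2 ^ 2 ∂Q := by
      rw [hA2, ← hQ1, integral_map measurable_fst.aemeasurable (f := fun p : E × E => dist p.1 p.2 ^ 2)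
        (((continuous_fst.dist continuous_snd).pow 2).aestronglyMeasurable)]
    have IB : B2 = ∫ ω, dist ω.2.1 ω.2.2 ^ 2 ∂Q := by
      rw [hB2, ← hQ2, integral_map measurable_snd.aemeasurable (f := fun p : E × E => dist p.1 p.2 ^ 2)
        (((continuous_fst.dist continuous_snd).pow 2).aestronglyMeasurable)]
    set r := ∫ p, (dist p.1.1 p.2.1 ^ 2 + dist p.1.2 p.2.2 ^ 2) ∂Q with hrdef
    have rnn : 0 ≤ r := integral_nonneg fun ω => by positivity
    -- chain of inequalities
    have step1 : ∫ ω, dist ω.1.1 ω.1.2 ^ 2 ∂Q ≤ ∫ ω, (u ω + v ω) ^ 2 ∂Q := by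
      refine integral_mono hIh hIuv fun ω => ?_
      exact pow_le_pow_left₀ dist_nonneg (ptwise ω) 2
    have step2 := minkowski2 hum hvm hIu hIv
    have step3 : ∫ ω, u ω ^ 2 ∂Q ≤ 2 * r := by
      have h1 : ∫ ω, u ω ^ 2 ∂Q ≤ ∫ ω, 2 * (dist ω.1.1 ω.2.1 ^ 2 + dist ω.1.2 ω.2.2 ^ 2) ∂Q := by
        refine integral_mono hIu ((hIf1.add hIf3).const_mul 2) fun ω => ?_
        simp only [hu]
        nlinarith [sq_nonneg (dist ω.1.1 ω.2.1 - dist ω.1.2 ω.2.2)]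
      rwa [integral_const_mul] at h1
    have hsu : Real.sqrt (∫ ω, u ω ^ 2 ∂Q) ≤ Real.sqrt 2 * Real.sqrt r := by
      rw [← Real.sqrt_mul (by norm_num : (0:ℝ) ≤ 2)]
      exact Real.sqrt_le_sqrt step3
    have chain : Real.sqrt A2 ≤ Real.sqrt 2 * Real.sqrt r + Real.sqrt B2 := by
      calc Real.sqrt A2 ≤ Real.sqrt (∫ ω, (u ω + v ω) ^ 2 ∂Q) := by
            rw [IA]; exact Real.sqrt_le_sqrt step1
        _ ≤ Real.sqrt (∫ ω, u ω ^ 2 ∂Q) + Real.sqrt (∫ ω, v ω ^ 2 ∂Q) := step2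
        _ ≤ Real.sqrt 2 * Real.sqrt r + Real.sqrt B2 := by
            rw [IB]; exact add_le_add hsu le_rfl
    have hcr : c ≤ Real.sqrt r := by
      have hmul : Real.sqrt 2 * c = Real.sqrt A2 - Real.sqrt B2 := by
        rw [hcdef]; field_simp
      have h2 : Real.sqrt 2 * c ≤ Real.sqrt 2 * Real.sqrt r := by rw [hmul]; linarith
      exact le_of_mul_le_mul_left h2 hs2
    calc c ^ 2 ≤ Real.sqrt r ^ 2 := pow_le_pow_left₀ hcnn hcr 2
      _ = r := Real.sq_sqrt rnn
  -- nonemptiness of the set of coupling costs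
  have hne : Set.Nonempty {r : ℝ | ∃ Q : Measure ((E × E) × (E × E)),
      IsProbabilityMeasure Q ∧ IsCoupling Q pl plstar ∧
      r = ∫ p, (dist p.1.1 p.2.1 ^ 2 + dist p.1.2 p.2.2 ^ 2) ∂Q} := by
    refine ⟨_, pl.prod plstar, inferInstance, ⟨?_, ?_⟩, rfl⟩
    · rw [Measure.map_fst_prod]; simp
    · rw [Measure.map_snd_prod]; simp
  have hfin : c ^ 2 ≤ W2sqProd pl plstar := by
    rw [W2sqProd, Wcost]
    exact le_csInf hne hbound
  calc c = Real.sqrt (c ^ 2) := (Real.sqrt_sq hcnn).symm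
    _ ≤ W2Prod pl plstar := Real.sqrt_le_sqrt hfin
end

section
/- Let X ~ N(0, I_d) and Y ~ Uniform{v₁,...,v_M} be independent, with v₁,...,v_M distinct points in ℝ^d, and let Z_t = (1−t)X + tY for t ∈ [0,1). Then 0 ≤ 1 − E[ max_{1≤j≤M} P(Y = v_j | Z_t) ] ≤ (M−1) exp( − t² sep(Y)² / (8(1−t)²) ), where sep(Y) = min_{i≠j} ‖v_i − v_j‖. -/
open MeasureTheory ProbabilityTheory Real Filter
open scoped ENNReal

/-- Standard Gaussian measure `N(0, I_d)` on `ℝ^d`. -/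
noncomputable def stdGaussian (d : ℕ) : Measure (EuclideanSpace ℝ (Fin d)) :=
  (Measure.pi fun _ : Fin d => gaussianReal 0 1).map
    (MeasurableEquiv.toLp 2 (Fin d → ℝ))

/-- Uniform distribution on the atoms `v 0, …, v (M-1)`. -/
noncomputable def unifAtoms {d M : ℕ} (v : Fin M → EuclideanSpace ℝ (Fin d)) :
    Measure (EuclideanSpace ℝ (Fin d)) :=
  (M : ℝ≥0∞)⁻¹ • ∑ j, Measure.dirac (v j)

/-- Diameter of the atom cloud. -/
noncomputable def atomDiam {d M : ℕ} (v : Fin M → EuclideanSpace ℝ (Fin d)) : ℝ :=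
  ⨆ p : Fin M × Fin M, dist (v p.1) (v p.2)

/-- Minimal separation of the atom cloud. -/
noncomputable def atomSep {d M : ℕ} (v : Fin M → EuclideanSpace ℝ (Fin d)) : ℝ :=
  ⨅ p : {p : Fin M × Fin M // p.1 ≠ p.2}, dist (v p.1.1) (v p.1.2)

/-- Joint law of independent `X ~ N(0, I_d)` and `Y ~ Uniform{v_1,…,v_M}`. -/
noncomputable def jointPM {d M : ℕ} (v : Fin M → EuclideanSpace ℝ (Fin d)) :
    Measure (EuclideanSpace ℝ (Fin d) × EuclideanSpace ℝ (Fin d)) :=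
  (stdGaussian d).prod (unifAtoms v)

/-- The interpolation `Z_t = (1−t) X + t Y`. -/
noncomputable def interp {d : ℕ} (t : ℝ)
    (ω : EuclideanSpace ℝ (Fin d) × EuclideanSpace ℝ (Fin d)) :
    EuclideanSpace ℝ (Fin d) := (1 - t) • ω.1 + t • ω.2

/-- The σ-algebra generated by `Z_t`. -/
noncomputable def sigmaZ (d : ℕ) (t : ℝ) :
    MeasurableSpace (EuclideanSpace ℝ (Fin d) × EuclideanSpace ℝ (Fin d)) :=
  MeasurableSpace.comap (interp t) inferInstance

/-- Posterior probability `P(Y = v_j | Z_t)`, as a conditional expectation (a function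
of the sample point). -/
noncomputable def postProb {d M : ℕ} (v : Fin M → EuclideanSpace ℝ (Fin d)) (t : ℝ)
    (j : Fin M) :
    (EuclideanSpace ℝ (Fin d) × EuclideanSpace ℝ (Fin d)) → ℝ :=
  (jointPM v)[Set.indicator {ω : EuclideanSpace ℝ (Fin d) × EuclideanSpace ℝ (Fin d) |
      ω.2 = v j} (fun _ => (1 : ℝ)) | sigmaZ d t]

/- ### Auxiliary lemmas -/

open scoped NNReal RealInnerProductSpace

section Aux

lemma gauss_exp_aux (c : ℝ) : ∀ x : ℝ, (gaussianPDFReal 0 1 x).toNNReal • rexp (c * x)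
      = rexp (c ^ 2 / 2) * gaussianPDFReal c 1 x := by
  intro x
  rw [NNReal.smul_def, smul_eq_mul, Real.coe_toNNReal _ (gaussianPDFReal_nonneg 0 1 x)]
  simp only [gaussianPDFReal, NNReal.coe_one, mul_one, sub_zero]
  have key : rexp (-x ^ 2 / 2) * rexp (c * x) = rexp (c ^ 2 / 2) * rexp (-(x - c) ^ 2 / 2) := by
    rw [← Real.exp_add, ← Real.exp_add]; congr 1; ring
  linear_combination (√(2 * π))⁻¹ * key

lemma gauss_pdf_coe : (fun x => ENNReal.ofReal (gaussianPDFReal 0 1 x))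
      = fun x => ((gaussianPDFReal 0 1 x).toNNReal : ℝ≥0∞) := rfl

lemma integral_exp_mul_gauss (c : ℝ) :
    ∫ x, rexp (c * x) ∂(gaussianReal 0 1) = rexp (c ^ 2 / 2) := by
  rw [gaussianReal_of_var_ne_zero _ one_ne_zero]
  simp only [gaussianPDF_def]
  rw [gauss_pdf_coe, integral_withDensity_eq_integral_smul
    (measurable_gaussianPDFReal 0 1).real_toNNReal]
  simp only [gauss_exp_aux c]
  rw [integral_const_mul, integral_gaussianPDFReal_eq_one c one_ne_zero, mul_one]

lemma integrable_exp_mul_gauss (c : ℝ) :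
    Integrable (fun x => rexp (c * x)) (gaussianReal 0 1) := by
  rw [gaussianReal_of_var_ne_zero _ one_ne_zero]
  simp only [gaussianPDF_def]
  rw [gauss_pdf_coe, integrable_withDensity_iff_integrable_smul
    (measurable_gaussianPDFReal 0 1).real_toNNReal]
  simp only [gauss_exp_aux c]
  exact (integrable_gaussianPDFReal c 1).const_mul _

lemma pi_gauss_exp (d : ℕ) (u : Fin d → ℝ) :
    ∫ x : Fin d → ℝ, rexp (∑ i, u i * x i) ∂(Measure.pi fun _ => gaussianReal 0 1)
      = rexp ((∑ i, u i ^ 2) / 2) := by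
  letI : MeasureSpace ℝ := ⟨gaussianReal 0 1⟩
  haveI : SigmaFinite (volume : Measure ℝ) := (inferInstance : SigmaFinite (gaussianReal 0 1))
  have h : (Measure.pi fun _ : Fin d => gaussianReal 0 1) = (volume : Measure (Fin d → ℝ)) := by
    rw [volume_pi]; rfl
  rw [h]
  have he : ∀ x : Fin d → ℝ, rexp (∑ i, u i * x i) = ∏ i, rexp (u i * x i) := fun x =>
    Real.exp_sum _ _
  simp_rw [he]
  rw [volume_pi, MeasureTheory.integral_fintype_prod_eq_prod (ι := Fin d) (fun i y => rexp (u i * y))]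
  calc (∏ i : Fin d, ∫ x : ℝ, rexp (u i * x))
      = ∏ i : Fin d, rexp (u i ^ 2 / 2) :=
        Finset.prod_congr rfl fun i _ => integral_exp_mul_gauss (u i)
    _ = rexp ((∑ i, u i ^ 2) / 2) := by rw [← Real.exp_sum, Finset.sum_div]

lemma pi_gauss_exp_integrable (d : ℕ) (u : Fin d → ℝ) :
    Integrable (fun x : Fin d → ℝ => rexp (∑ i, u i * x i))
      (Measure.pi fun _ => gaussianReal 0 1) := by
  letI : MeasureSpace ℝ := ⟨gaussianReal 0 1⟩
  haveI : SigmaFinite (volume : Measure ℝ) := (inferInstance : SigmaFinite (gaussianReal 0 1))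
  have h : (Measure.pi fun _ : Fin d => gaussianReal 0 1) = (volume : Measure (Fin d → ℝ)) := by
    rw [volume_pi]; rfl
  rw [h]
  have he : ∀ x : Fin d → ℝ, rexp (∑ i, u i * x i) = ∏ i, rexp (u i * x i) := fun x =>
    Real.exp_sum _ _
  simp_rw [he]
  exact MeasureTheory.Integrable.fintype_prod (f := fun i y => rexp (u i * y))
    fun i => integrable_exp_mul_gauss (u i)

instance stdGaussian_prob (d : ℕ) : IsProbabilityMeasure (stdGaussian d) := by
  unfold _root_.stdGaussian
  exact Measure.isProbabilityMeasure_map (MeasurableEquiv.measurable _).aemeasurable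

lemma inner_eq_sum {d : ℕ} (u x : EuclideanSpace ℝ (Fin d)) : ⟪u, x⟫ = ∑ i, u i * x i := by
  simp [PiLp.inner_apply, RCLike.inner_apply, conj_trivial]
  exact Finset.sum_congr rfl fun _ _ => mul_comm _ _

lemma norm_sq_eq_sum {d : ℕ} (u : EuclideanSpace ℝ (Fin d)) : ‖u‖ ^ 2 = ∑ i, u i ^ 2 := by
  rw [← real_inner_self_eq_norm_sq, inner_eq_sum]
  simp [sq]

lemma stdGaussian_exp_inner (d : ℕ) (u : EuclideanSpace ℝ (Fin d)) :
    ∫ x, rexp (⟪u, x⟫) ∂(stdGaussian d) = rexp (‖u‖ ^ 2 / 2) := by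
  unfold _root_.stdGaussian
  rw [MeasureTheory.integral_map_equiv]
  simp_rw [inner_eq_sum]
  have : ∀ y : Fin d → ℝ, (∑ i, u i * ((MeasurableEquiv.toLp 2 (Fin d → ℝ)) y) i)
      = ∑ i, u i * y i := fun y => rfl
  simp_rw [this, pi_gauss_exp d (fun i => u i), norm_sq_eq_sum]

lemma stdGaussian_exp_inner_integrable (d : ℕ) (u : EuclideanSpace ℝ (Fin d)) :
    Integrable (fun x => rexp (⟪u, x⟫)) (stdGaussian d) := by
  unfold _root_.stdGaussian
  rw [MeasureTheory.integrable_map_equiv]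
  simp_rw [inner_eq_sum]
  exact pi_gauss_exp_integrable d (fun i => u i)

lemma stdGaussian_tail (d : ℕ) (u : EuclideanSpace ℝ (Fin d)) (hu : u ≠ 0) (a : ℝ) (ha : 0 ≤ a) :
    ((stdGaussian d) {x | ⟪u, x⟫ ≤ -a}).toReal ≤ rexp (-a ^ 2 / (2 * ‖u‖ ^ 2)) := by
  set μ := stdGaussian d
  set l : ℝ := a / ‖u‖ ^ 2 with hl
  have hun : ‖u‖ ≠ 0 := norm_ne_zero_iff.2 hu
  have hnu : (0:ℝ) < ‖u‖ ^ 2 := by positivity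
  have hl0 : 0 ≤ l := div_nonneg ha hnu.le
  set S : Set (EuclideanSpace ℝ (Fin d)) := {x | ⟪u, x⟫ ≤ -a} with hSdef
  have hS : MeasurableSet S := by
    have : Continuous fun x : EuclideanSpace ℝ (Fin d) => ⟪u, x⟫ :=
      continuous_const.inner continuous_id
    exact measurableSet_le this.measurable measurable_const
  have key : (μ S).toReal * rexp (l * a) ≤ rexp (l ^ 2 * ‖u‖ ^ 2 / 2) := by
    have h1 : (μ S).toReal * rexp (l * a) = ∫ _ in S, rexp (l * a) ∂μ := by
      rw [setIntegral_const, smul_eq_mul, measureReal_def]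
    rw [h1]
    have h2 : ∫ x in S, rexp (l * a) ∂μ ≤ ∫ x in S, rexp (⟪-l • u, x⟫) ∂μ := by
      apply setIntegral_mono_on (integrableOn_const (measure_lt_top μ S).ne)
        ((stdGaussian_exp_inner_integrable d (-l • u)).integrableOn) hS
      intro x hx
      apply Real.exp_le_exp.2
      rw [inner_smul_left]
      simp only [RCLike.conj_to_real, neg_mul]
      have hx' : ⟪u, x⟫ ≤ -a := hx
      nlinarith [mul_le_mul_of_nonneg_left hx' hl0]
    refine h2.trans ?_
    have h3 : ∫ x in S, rexp (⟪-l • u, x⟫) ∂μ ≤ ∫ x, rexp (⟪-l • u, x⟫) ∂μ :=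
      setIntegral_le_integral (stdGaussian_exp_inner_integrable d (-l • u))
        (Filter.Eventually.of_forall fun x => (Real.exp_pos _).le)
    refine h3.trans ?_
    rw [stdGaussian_exp_inner]
    apply Real.exp_le_exp.2
    have hw : ‖(-l) • u‖ ^ 2 = l ^ 2 * ‖u‖ ^ 2 := by
      rw [norm_smul]; simp [mul_pow, sq_abs]
    rw [hw]
  have hepos : 0 < rexp (l * a) := Real.exp_pos _
  have h4 : (μ S).toReal ≤ rexp (l ^ 2 * ‖u‖ ^ 2 / 2) / rexp (l * a) := by
    rwa [le_div_iff₀ hepos]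
  rw [← Real.exp_sub] at h4
  refine h4.trans (le_of_eq ?_)
  congr 1
  rw [hl]
  field_simp
  ring

lemma integrable_finset_sup' {α ι : Type*} {mα : MeasurableSpace α} {μ : Measure α}
    {s : Finset ι} (hs : s.Nonempty) {f : ι → α → ℝ} (hf : ∀ i ∈ s, Integrable (f i) μ) :
    Integrable (fun ω => s.sup' hs fun i => f i ω) μ := by
  induction hs using Finset.Nonempty.cons_induction with
  | singleton i => simpa using hf i (by simp)
  | cons i s his hs ih =>
    have h : (fun ω => (Finset.cons i s his).sup' (Finset.cons_nonempty his) fun j => f j ω)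
        = fun ω => (f i ω) ⊔ (s.sup' hs fun j => f j ω) := by
      funext ω; exact Finset.sup'_cons hs fun j => f j ω
    rw [h]
    exact (hf i (by simp)).sup (ih fun j hj => hf j (by simp [hj]))

lemma unifAtoms_singleton {d M : ℕ} {v : Fin M → EuclideanSpace ℝ (Fin d)}
    (hv : Function.Injective v) (j : Fin M) :
    unifAtoms v {v j} = (M : ℝ≥0∞)⁻¹ := by
  rw [unifAtoms, Measure.smul_apply, Measure.finset_sum_apply]
  have h : ∀ k : Fin M, Measure.dirac (v k) {v j} = if k = j then 1 else 0 := by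
    intro k
    rw [Measure.dirac_apply' _ (measurableSet_singleton _)]
    by_cases h : k = j
    · simp [h]
    · simp [Set.indicator, hv.ne h, h]
  rw [Finset.sum_congr rfl fun k _ => h k]
  simp [smul_eq_mul]

lemma unifAtoms_prob {d M : ℕ} (hM : 1 ≤ M) (v : Fin M → EuclideanSpace ℝ (Fin d)) :
    IsProbabilityMeasure (unifAtoms v) := by
  constructor
  rw [unifAtoms, Measure.smul_apply, Measure.finset_sum_apply]
  simp only [Measure.dirac_apply' _ MeasurableSet.univ, Set.indicator_univ, Pi.one_apply,
    Finset.sum_const, Finset.card_univ, Fintype.card_fin, nsmul_eq_mul, mul_one, smul_eq_mul]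
  exact ENNReal.inv_mul_cancel (by exact_mod_cast Nat.one_le_iff_ne_zero.mp hM) (by simp)

lemma unifAtoms_sfinite {d M : ℕ} (v : Fin M → EuclideanSpace ℝ (Fin d)) :
    SFinite (unifAtoms v) := by
  unfold unifAtoms; infer_instance

lemma measurable_interp {d : ℕ} (t : ℝ) : Measurable (interp (d := d) t) :=
  ((by unfold interp; fun_prop) :
    Continuous (interp (d := d) t)).measurable

lemma jointPM_inter {d M : ℕ} {v : Fin M → EuclideanSpace ℝ (Fin d)}
    (hv : Function.Injective v) (t : ℝ) (j : Fin M) (A : Set (EuclideanSpace ℝ (Fin d)))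
    (hA : MeasurableSet A) :
    jointPM v ((interp t ⁻¹' A) ∩ {ω | ω.2 = v j})
      = (M : ℝ≥0∞)⁻¹ * stdGaussian d {x | (1 - t) • x + t • v j ∈ A} := by
  haveI := unifAtoms_sfinite v
  set B : Set (EuclideanSpace ℝ (Fin d)) := {x | (1 - t) • x + t • v j ∈ A} with hB
  have hBmeas : MeasurableSet B := by
    have hc : Continuous fun x : EuclideanSpace ℝ (Fin d) => (1 - t) • x + t • v j := by
      fun_prop
    exact hc.measurable hA
  have hW : MeasurableSet ((interp t ⁻¹' A) ∩ {ω : EuclideanSpace ℝ (Fin d) ×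
      EuclideanSpace ℝ (Fin d) | ω.2 = v j}) :=
    ((measurable_interp t) hA).inter (measurable_snd (measurableSet_singleton _))
  rw [jointPM, Measure.prod_apply hW]
  have hsec : ∀ x : EuclideanSpace ℝ (Fin d),
      unifAtoms v (Prod.mk x ⁻¹' ((interp t ⁻¹' A) ∩ {ω | ω.2 = v j}))
        = B.indicator (fun _ => (M : ℝ≥0∞)⁻¹) x := by
    intro x
    have hpre : (Prod.mk x ⁻¹' ((interp t ⁻¹' A) ∩ {ω | ω.2 = v j}))
        = {y | (1 - t) • x + t • y ∈ A ∧ y = v j} := rfl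
    rw [hpre]
    by_cases hx : x ∈ B
    · have h : {y | (1 - t) • x + t • y ∈ A ∧ y = v j} = {v j} := by
        ext y
        constructor
        · rintro ⟨-, h2⟩; exact h2
        · rintro rfl; exact ⟨hx, rfl⟩
      rw [h, unifAtoms_singleton hv j, Set.indicator_of_mem hx]
    · have h : {y | (1 - t) • x + t • y ∈ A ∧ y = v j} = ∅ := by
        ext y
        simp only [Set.mem_setOf_eq, Set.mem_empty_iff_false, iff_false, not_and]
        rintro h1 rfl; exact hx h1
      rw [h, Set.indicator_of_notMem hx, measure_empty]
  rw [lintegral_congr hsec, lintegral_indicator hBmeas]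
  simp [mul_comm]

/-- The good region in x-space for atom j. -/
def goodB {d M : ℕ} (v : Fin M → EuclideanSpace ℝ (Fin d)) (t : ℝ) (j : Fin M) :
    Set (EuclideanSpace ℝ (Fin d)) :=
  {x | ∀ k, k ≠ j → ‖(1 - t) • x‖ < ‖(1 - t) • x + t • (v j - v k)‖}

lemma goodB_meas {d M : ℕ} (v : Fin M → EuclideanSpace ℝ (Fin d)) (t : ℝ) (j : Fin M) :
    MeasurableSet (goodB v t j) := by
  have h : goodB v t j = ⋂ k, ⋂ (_ : k ≠ j),
      {x : EuclideanSpace ℝ (Fin d) | ‖(1 - t) • x‖ < ‖(1 - t) • x + t • (v j - v k)‖} := by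
    ext x; simp [goodB]
  rw [h]
  refine MeasurableSet.iInter fun k => MeasurableSet.iInter fun _ => ?_
  have h1 : Continuous fun x : EuclideanSpace ℝ (Fin d) => ‖(1 - t) • x‖ := by
    fun_prop
  have h2 : Continuous fun x : EuclideanSpace ℝ (Fin d) => ‖(1 - t) • x + t • (v j - v k)‖ := by
    fun_prop
  exact measurableSet_lt h1.measurable h2.measurable

lemma goodB_bound {d M : ℕ} {v : Fin M → EuclideanSpace ℝ (Fin d)}
    (hv : Function.Injective v) {t : ℝ} (ht0 : 0 < t) (ht1 : t < 1) (j : Fin M) :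
    1 - ∑ k ∈ Finset.univ.erase j,
        rexp (-(t ^ 2 * ‖v j - v k‖ ^ 2) / (8 * (1 - t) ^ 2))
      ≤ ((stdGaussian d) (goodB v t j)).toReal := by
  set γ := stdGaussian d
  have h1t : (0:ℝ) < 1 - t := by linarith
  set C : Fin M → Set (EuclideanSpace ℝ (Fin d)) := fun k =>
    {x | ⟪v j - v k, x⟫ ≤ -(t * ‖v j - v k‖ ^ 2 / (2 * (1 - t)))} with hC
  have hsub : (goodB v t j)ᶜ ⊆ ⋃ k ∈ Finset.univ.erase j, C k := by
    intro x hx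
    simp only [goodB, Set.mem_compl_iff, Set.mem_setOf_eq, not_forall] at hx
    obtain ⟨k, hkj, hk⟩ := hx
    push_neg at hk
    refine Set.mem_biUnion (Finset.mem_erase.2 ⟨hkj, Finset.mem_univ k⟩) ?_
    set u := v j - v k
    have hsq : ‖(1 - t) • x + t • u‖ ^ 2 ≤ ‖(1 - t) • x‖ ^ 2 := by
      have := norm_nonneg ((1 - t) • x + t • u)
      nlinarith [hk]
    have hexpand : ‖(1 - t) • x + t • u‖ ^ 2
        = ‖(1 - t) • x‖ ^ 2 + 2 * (t * (1 - t) * ⟪u, x⟫) + t ^ 2 * ‖u‖ ^ 2 := by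
      rw [norm_add_sq_real]
      rw [real_inner_smul_left, real_inner_smul_right, real_inner_comm]
      rw [norm_smul, norm_smul]
      simp [mul_pow, sq_abs]
      ring
    have key : ⟪u, x⟫ * (2 * (1 - t)) ≤ -(t * ‖u‖ ^ 2) := by nlinarith
    show ⟪u, x⟫ ≤ -(t * ‖u‖ ^ 2 / (2 * (1 - t)))
    rw [show -(t * ‖u‖ ^ 2 / (2 * (1 - t))) = -(t * ‖u‖ ^ 2) / (2 * (1 - t)) by ring,
      le_div_iff₀ (by linarith)]
    exact key
  have hmeas := goodB_meas v t j
  have hcompl : (γ (goodB v t j)).toReal = 1 - (γ (goodB v t j)ᶜ).toReal := by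
    have h := prob_compl_eq_one_sub hmeas (μ := γ)
    have hle : γ (goodB v t j) ≤ 1 := prob_le_one
    rw [h, ENNReal.toReal_sub_of_le hle (by simp)]
    simp
  rw [hcompl]
  have hbd : (γ (goodB v t j)ᶜ).toReal
      ≤ ∑ k ∈ Finset.univ.erase j, rexp (-(t ^ 2 * ‖v j - v k‖ ^ 2) / (8 * (1 - t) ^ 2)) := by
    have h1 : γ (goodB v t j)ᶜ ≤ ∑ k ∈ Finset.univ.erase j, γ (C k) :=
      (measure_mono hsub).trans (measure_biUnion_finset_le _ _)
    have h2 : (γ (goodB v t j)ᶜ).toReal ≤ ∑ k ∈ Finset.univ.erase j, (γ (C k)).toReal := by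
      refine (ENNReal.toReal_mono ?_ h1).trans_eq (ENNReal.toReal_sum fun k _ => ?_)
      · exact (ENNReal.sum_lt_top.2 fun k _ => measure_lt_top γ _).ne
      · exact (measure_lt_top γ _).ne
    refine h2.trans (Finset.sum_le_sum fun k hk => ?_)
    have hkj : k ≠ j := (Finset.mem_erase.1 hk).1
    set u := v j - v k with hu
    have hune : u ≠ 0 := sub_ne_zero.2 (hv.ne (Ne.symm hkj))
    have hunorm : (0:ℝ) < ‖u‖ := norm_pos_iff.2 hune
    have ha : 0 ≤ t * ‖u‖ ^ 2 / (2 * (1 - t)) := by positivity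
    refine (stdGaussian_tail d u hune _ ha).trans (le_of_eq ?_)
    congr 1
    field_simp
    ring
  linarith

end Aux

/-- Posterior concentration for the independent coupling: the expected maximal posterior
weight converges to one at rate `(M−1) exp(−t² sep(𝒴)² / (8(1−t)²))`. -/
theorem posterior_concentration (d M : ℕ) (hM : 1 ≤ M)
    (v : Fin M → EuclideanSpace ℝ (Fin d)) (hv : Function.Injective v)
    (t : ℝ) (ht : t ∈ Set.Ico (0 : ℝ) 1) :
    0 ≤ 1 - ∫ ω, (⨆ j, postProb v t j ω) ∂(jointPM v) ∧
    1 - ∫ ω, (⨆ j, postProb v t j ω) ∂(jointPM v) ≤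
      ((M : ℝ) - 1) * Real.exp (-(t ^ 2 * atomSep v ^ 2) / (8 * (1 - t) ^ 2)) := by
  obtain ⟨ht0, ht1⟩ := ht
  haveI : NeZero M := ⟨Nat.one_le_iff_ne_zero.mp hM⟩
  haveI := unifAtoms_prob hM v
  haveI := unifAtoms_sfinite v
  haveI : IsProbabilityMeasure (jointPM v) := by
    unfold jointPM; infer_instance
  set μ := jointPM v with hμ
  have hm : sigmaZ d t ≤ Prod.instMeasurableSpace := (measurable_interp t).comap_le
  haveI : SigmaFinite (μ.trim hm) := inferInstance
  -- basic condexp facts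
  set T : Fin M → Set (EuclideanSpace ℝ (Fin d) × EuclideanSpace ℝ (Fin d)) :=
    fun j => {ω | ω.2 = v j} with hT
  have hTmeas : ∀ j, MeasurableSet (T j) := fun j =>
    measurable_snd (measurableSet_singleton (v j))
  set ind : Fin M → (EuclideanSpace ℝ (Fin d) × EuclideanSpace ℝ (Fin d)) → ℝ :=
    fun j => Set.indicator (T j) (fun _ => (1:ℝ)) with hind
  have hind_int : ∀ j, Integrable (ind j) μ := fun j =>
    (integrable_const (1:ℝ)).indicator (hTmeas j)
  set p : Fin M → (EuclideanSpace ℝ (Fin d) × EuclideanSpace ℝ (Fin d)) → ℝ :=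
    postProb v t with hp
  have hpdef : ∀ j, p j = μ[ind j | sigmaZ d t] := fun j => rfl
  have hp_int : ∀ j, Integrable (p j) μ := fun j => integrable_condExp
  have hp_nonneg : ∀ j, 0 ≤ᵐ[μ] p j := fun j =>
    condExp_nonneg (Filter.Eventually.of_forall fun ω => Set.indicator_nonneg
      (fun _ _ => zero_le_one) ω)
  have hp_le_one : ∀ j, p j ≤ᵐ[μ] fun _ => (1:ℝ) := by
    intro j
    have h1 : μ[ind j | sigmaZ d t] ≤ᵐ[μ] μ[(fun _ => (1:ℝ)) | sigmaZ d t] :=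
      condExp_mono (hind_int j) (integrable_const 1)
        (Filter.Eventually.of_forall fun ω => by
          by_cases h : ω ∈ T j <;>
            simp [hind, Set.indicator_of_mem, Set.indicator_of_notMem, h])
    have h2 : (μ[(fun _ => (1:ℝ)) | sigmaZ d t]) = fun _ => (1:ℝ) := condExp_const hm _
    rwa [h2] at h1
  set F : (EuclideanSpace ℝ (Fin d) × EuclideanSpace ℝ (Fin d)) → ℝ :=
    fun ω => ⨆ j, p j ω with hF
  have hFp : ∀ (ω) (j), p j ω ≤ F ω := fun ω j =>
    le_ciSup (f := fun j => p j ω) (Set.Finite.bddAbove (Set.finite_range _)) j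
  have hFsup' : F = fun ω => Finset.univ.sup' Finset.univ_nonempty (fun j => p j ω) :=
    funext fun ω => (Finset.sup'_univ_eq_ciSup _).symm
  have hF_int : Integrable F μ := by
    rw [hFsup']
    exact integrable_finset_sup' _ fun j _ => hp_int j
  have hF_le_one : F ≤ᵐ[μ] fun _ => (1:ℝ) := by
    have hall : ∀ᵐ ω ∂μ, ∀ j, p j ω ≤ 1 := ae_all_iff.2 fun j => hp_le_one j
    filter_upwards [hall] with ω hω
    exact ciSup_le fun j => hω j
  have hF_nonneg : 0 ≤ᵐ[μ] F := by
    filter_upwards [hp_nonneg ⟨0, Nat.pos_of_ne_zero (NeZero.ne M)⟩] with ω hω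
    exact le_trans hω (hFp ω _)
  have hint_le_one : ∫ ω, F ω ∂μ ≤ 1 := by
    have h := integral_mono_ae hF_int (integrable_const (1:ℝ)) hF_le_one
    simpa using h
  refine ⟨by linarith, ?_⟩
  -- upper bound on 1 - ∫ F
  rcases eq_or_lt_of_le ht0 with htz | htpos
  · -- t = 0
    subst htz
    rcases eq_or_lt_of_le hM with hM1 | hM2
    · -- M = 1 : the posterior is identically one
      have hj0 : ∀ ω, F ω ≥ p ⟨0, by omega⟩ ω := fun ω => hFp ω _
      have hintp : ∫ ω, p ⟨0, by omega⟩ ω ∂μ = 1 := by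
        rw [hpdef, integral_condExp hm]
        rw [hind]
        rw [integral_indicator_const (1:ℝ) (hTmeas _)]
        have hTuniv : T ⟨0, by omega⟩ = (interp (0:ℝ) ⁻¹' Set.univ) ∩ T ⟨0, by omega⟩ := by
          simp
        rw [smul_eq_mul, mul_one, measureReal_def, hμ, hTuniv, jointPM_inter hv 0 _ Set.univ MeasurableSet.univ]
        have : {x : EuclideanSpace ℝ (Fin d) |
            (1 - (0:ℝ)) • x + (0:ℝ) • v ⟨0, by omega⟩ ∈ Set.univ} = Set.univ := by simp
        rw [this, measure_univ, mul_one, ← hM1]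
        simp
      have hge : (1:ℝ) ≤ ∫ ω, F ω ∂μ := by
        rw [← hintp]
        exact integral_mono_ae (hp_int _) hF_int (Filter.Eventually.of_forall fun ω => hj0 ω)
      have : ((M:ℝ) - 1) = 0 := by rw [← hM1]; norm_num
      rw [this, zero_mul]
      linarith
    · -- M ≥ 2 : trivial bound
      have hF0 : 0 ≤ ∫ ω, F ω ∂μ := integral_nonneg_of_ae hF_nonneg
      have hexp : rexp (-((0:ℝ) ^ 2 * atomSep v ^ 2) / (8 * (1 - (0:ℝ)) ^ 2)) = 1 := by
        norm_num
      rw [hexp, mul_one]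
      have : (2:ℝ) ≤ (M:ℝ) := by exact_mod_cast hM2
      linarith
  · -- 0 < t
    set E : ℝ := rexp (-(t ^ 2 * atomSep v ^ 2) / (8 * (1 - t) ^ 2)) with hE
    -- decision regions in z-space
    set Az : Fin M → Set (EuclideanSpace ℝ (Fin d)) := fun j =>
      {z | ∀ k, k ≠ j → ‖z - t • v j‖ < ‖z - t • v k‖} with hAz
    have hAzmeas : ∀ j, MeasurableSet (Az j) := by
      intro j
      have h : Az j = ⋂ k, ⋂ (_ : k ≠ j),
          {z : EuclideanSpace ℝ (Fin d) | ‖z - t • v j‖ < ‖z - t • v k‖} := by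
        ext z; simp [hAz]
      rw [h]
      refine MeasurableSet.iInter fun k => MeasurableSet.iInter fun _ => ?_
      have h1 : Continuous fun z : EuclideanSpace ℝ (Fin d) => ‖z - t • v j‖ :=
        (continuous_id.sub continuous_const).norm
      have h2 : Continuous fun z : EuclideanSpace ℝ (Fin d) => ‖z - t • v k‖ :=
        (continuous_id.sub continuous_const).norm
      exact measurableSet_lt h1.measurable h2.measurable
    set S : Fin M → Set (EuclideanSpace ℝ (Fin d) × EuclideanSpace ℝ (Fin d)) :=
      fun j => interp t ⁻¹' (Az j) with hS
    have hSm : ∀ j, MeasurableSet[sigmaZ d t] (S j) := fun j => ⟨Az j, hAzmeas j, rfl⟩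
    have hSmeas : ∀ j, MeasurableSet (S j) := fun j => hm _ (hSm j)
    have hSdisj : Set.Pairwise (↑(Finset.univ : Finset (Fin M))) (Function.onFun Disjoint S) := by
      intro j _ j' _ hjj'
      rw [Function.onFun, Set.disjoint_left]
      intro ω h1 h2
      have ha := h1 j' (Ne.symm hjj')
      have hb := h2 j hjj'
      exact absurd (lt_trans ha hb) (lt_irrefl _)
    -- the good region identity
    have hBeq : ∀ j, {x : EuclideanSpace ℝ (Fin d) | (1 - t) • x + t • v j ∈ Az j}
        = goodB v t j := by
      intro j
      ext x
      simp only [Set.mem_setOf_eq, hAz, goodB]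
      constructor
      · intro h k hk
        have := h k hk
        have e1 : (1 - t) • x + t • v j - t • v j = (1 - t) • x := by abel
        have e2 : (1 - t) • x + t • v j - t • v k = (1 - t) • x + t • (v j - v k) := by
          rw [smul_sub]; abel
        rwa [e1, e2] at this
      · intro h k hk
        have := h k hk
        have e1 : (1 - t) • x + t • v j - t • v j = (1 - t) • x := by abel
        have e2 : (1 - t) • x + t • v j - t • v k = (1 - t) • x + t • (v j - v k) := by
          rw [smul_sub]; abel
        rwa [e1, e2]
    -- lower bound chain
    have step1 : ∑ j, ∫ ω in S j, F ω ∂μ ≤ ∫ ω, F ω ∂μ := by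
      rw [← integral_biUnion_finset Finset.univ (fun j _ => hSmeas j) hSdisj
        (fun j _ => hF_int.integrableOn)]
      exact setIntegral_le_integral hF_int hF_nonneg
    have step2 : ∀ j, ∫ ω in S j, p j ω ∂μ ≤ ∫ ω in S j, F ω ∂μ := fun j =>
      setIntegral_mono ((hp_int j).integrableOn) (hF_int.integrableOn) (fun ω => hFp ω j)
    have step3 : ∀ j, ∫ ω in S j, p j ω ∂μ = (μ (S j ∩ T j)).toReal := by
      intro j
      rw [hpdef, setIntegral_condExp hm (hind_int j) (hSm j), hind,
        setIntegral_indicator (hTmeas j), setIntegral_const, smul_eq_mul, mul_one, measureReal_def]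
    have step4 : ∀ j, (μ (S j ∩ T j)).toReal
        = (M:ℝ)⁻¹ * ((stdGaussian d) (goodB v t j)).toReal := by
      intro j
      rw [hμ, hS, jointPM_inter hv t j (Az j) (hAzmeas j), hBeq j, ENNReal.toReal_mul]
      congr 1
      simp [ENNReal.toReal_inv]
    -- separation bound: each summand ≤ E
    have hsep0 : 0 ≤ atomSep v := Real.iInf_nonneg fun p => dist_nonneg
    have hexp_le : ∀ j, ∀ k ∈ Finset.univ.erase j,
        rexp (-(t ^ 2 * ‖v j - v k‖ ^ 2) / (8 * (1 - t) ^ 2)) ≤ E := by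
      intro j k hk
      have hkj : k ≠ j := (Finset.mem_erase.1 hk).1
      have hsep_le : atomSep v ≤ ‖v j - v k‖ := by
        have hb : BddBelow (Set.range fun p : {p : Fin M × Fin M // p.1 ≠ p.2} =>
            dist (v p.1.1) (v p.1.2)) := ⟨0, by rintro r ⟨q, rfl⟩; exact dist_nonneg⟩
        have := ciInf_le hb (⟨(j, k), Ne.symm hkj⟩ : {p : Fin M × Fin M // p.1 ≠ p.2})
        rwa [dist_eq_norm] at this
      rw [hE]
      apply Real.exp_le_exp.2
      have h8 : (0:ℝ) < 8 * (1 - t) ^ 2 := by nlinarith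
      rw [div_le_div_iff_of_pos_right h8, neg_le_neg_iff]
      have h2 : atomSep v ^ 2 ≤ ‖v j - v k‖ ^ 2 := by nlinarith
      nlinarith [sq_nonneg t]
    have step5 : ∀ j, 1 - ((M:ℝ) - 1) * E ≤ ((stdGaussian d) (goodB v t j)).toReal := by
      intro j
      refine le_trans ?_ (goodB_bound hv htpos ht1 j)
      have hsum : ∑ k ∈ Finset.univ.erase j,
          rexp (-(t ^ 2 * ‖v j - v k‖ ^ 2) / (8 * (1 - t) ^ 2))
          ≤ ((M:ℝ) - 1) * E := by
        refine le_trans (Finset.sum_le_sum (hexp_le j)) ?_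
        rw [Finset.sum_const, nsmul_eq_mul]
        have hc : ((Finset.univ.erase j).card : ℝ) = (M:ℝ) - 1 := by
          rw [Finset.card_erase_of_mem (Finset.mem_univ j), Finset.card_univ, Fintype.card_fin]
          have : 1 ≤ M := hM
          push_cast [Nat.cast_sub this]
          ring
        rw [hc]
      linarith
    -- assemble
    have hMpos : (0:ℝ) < (M:ℝ) := by exact_mod_cast Nat.pos_of_ne_zero (NeZero.ne M)
    have main : 1 - ((M:ℝ) - 1) * E ≤ ∫ ω, F ω ∂μ := by
      have hchain : ∑ j : Fin M, (M:ℝ)⁻¹ * ((stdGaussian d) (goodB v t j)).toReal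
          ≤ ∫ ω, F ω ∂μ := by
        refine le_trans ?_ step1
        refine Finset.sum_le_sum fun j _ => ?_
        rw [← step4 j, ← step3 j]
        exact step2 j
      have hlow : ∑ j : Fin M, (M:ℝ)⁻¹ * (1 - ((M:ℝ) - 1) * E)
          ≤ ∑ j : Fin M, (M:ℝ)⁻¹ * ((stdGaussian d) (goodB v t j)).toReal := by
        refine Finset.sum_le_sum fun j _ => ?_
        exact mul_le_mul_of_nonneg_left (step5 j) (by positivity)
      have hsum : ∑ _j : Fin M, (M:ℝ)⁻¹ * (1 - ((M:ℝ) - 1) * E)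
          = 1 - ((M:ℝ) - 1) * E := by
        rw [Finset.sum_const, Finset.card_univ, Fintype.card_fin, nsmul_eq_mul]
        field_simp
      linarith
    linarith
end

section
/- Let μ have compact support in ℝ^d with R = max_j sup_{x ∈ supp(μ)} ‖x − v_j‖², let the empirical target weights satisfy q̂_j ≥ 1/(2M) for all j with ∑_j q̂_j = 1, and let H_k(λ) = ∫ ψ_λ dμ̂ + ∑_j q̂_j λ_j be the empirical semidiscrete dual objective, where ψ_λ(x) = min_j(‖x − v_j‖² − λ_j), restricted to Λ = {λ ∈ ℝ^M : ∑_j λ_j = 0}. Then any λ ∈ Λ with H_k(λ) ≥ H_k(0) satisfies max_j λ_j ≤ 2R and min_j λ_j ≥ −2(M−1)R; in particular, H_k attains its maximum on Λ and every maximizer lies in the compact set Λ ∩ [−2(M−1)R, 2R]^M. -/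
open MeasureTheory ProbabilityTheory Real

/-- Compactness of empirical maximizers of the semidiscrete dual objective: on the event
where all empirical target weights are at least `1/(2M)`, any `λ` with `∑ λ_j = 0` that
improves on `λ = 0` satisfies `max_j λ_j ≤ 2R` and `min_j λ_j ≥ −2(M−1)R`; consequently
the empirical dual objective attains its maximum on `Λ`, at a point in this box. -/
theorem empirical_dual_compact_maximizers (d M : ℕ) (hM : 0 < M)
    (v : Fin M → EuclideanSpace ℝ (Fin d))
    (S : Set (EuclideanSpace ℝ (Fin d))) (hS : IsCompact S)
    (μhat : Measure (EuclideanSpace ℝ (Fin d))) [IsProbabilityMeasure μhat]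
    (hsupp : μhat Sᶜ = 0)
    (R : ℝ) (hR : ∀ j, ∀ x ∈ S, ‖x - v j‖ ^ 2 ≤ R)
    (qhat : Fin M → ℝ) (hq : ∀ j, 1 / (2 * (M : ℝ)) ≤ qhat j) (hqsum : ∑ j, qhat j = 1)
    (H : (Fin M → ℝ) → ℝ)
    (hH : ∀ lam, H lam =
      (∫ x, (⨅ j, (‖x - v j‖ ^ 2 - lam j)) ∂μhat) + ∑ j, qhat j * lam j) :
    (∀ lam : Fin M → ℝ, ∑ j, lam j = 0 → H 0 ≤ H lam →
      (∀ j, lam j ≤ 2 * R) ∧ ∀ j, -(2 * ((M : ℝ) - 1) * R) ≤ lam j) ∧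
    ∃ lam0 : Fin M → ℝ, (∑ j, lam0 j = 0) ∧
      (∀ j, lam0 j ≤ 2 * R ∧ -(2 * ((M : ℝ) - 1) * R) ≤ lam0 j) ∧
      ∀ lam : Fin M → ℝ, ∑ j, lam j = 0 → H lam ≤ H lam0 := by
  haveI : Nonempty (Fin M) := ⟨⟨0, hM⟩⟩
  set ψ : (Fin M → ℝ) → EuclideanSpace ℝ (Fin d) → ℝ :=
    fun lam x => ⨅ j, (‖x - v j‖ ^ 2 - lam j) with hψ
  -- S is nonempty
  have hSne : S.Nonempty := by
    by_contra h
    rw [Set.not_nonempty_iff_eq_empty] at h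
    rw [h, Set.compl_empty] at hsupp
    simpa [hsupp] using (measure_univ (μ := μhat))
  have hR0 : 0 ≤ R := by
    obtain ⟨x, hx⟩ := hSne
    exact le_trans (by positivity) (hR ⟨0, hM⟩ x hx)
  -- a.e. membership in S
  have haeS : ∀ᵐ x ∂μhat, x ∈ S := by
    rw [MeasureTheory.ae_iff]
    simpa [Set.compl_def] using hsupp
  -- pointwise bounds on ψ
  have hbdd : ∀ (lam : Fin M → ℝ) (x : EuclideanSpace ℝ (Fin d)),
      BddBelow (Set.range fun j => ‖x - v j‖ ^ 2 - lam j) :=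
    fun lam x => Set.Finite.bddBelow (Set.finite_range _)
  have hψ_le : ∀ (lam : Fin M → ℝ) (x) (j), ψ lam x ≤ ‖x - v j‖ ^ 2 - lam j :=
    fun lam x j => ciInf_le (hbdd lam x) j
  have hψ_ge : ∀ (lam : Fin M → ℝ) (x), -‖lam‖ ≤ ψ lam x := by
    intro lam x
    refine le_ciInf fun j => ?_
    have h1 : lam j ≤ ‖lam‖ := le_trans (le_abs_self _) (norm_le_pi_norm lam j)
    nlinarith [sq_nonneg ‖x - v j‖]
  -- measurability / continuity of ψ lam
  have hψcont : ∀ lam : Fin M → ℝ, Continuous (ψ lam) := by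
    intro lam
    have : (ψ lam) = fun x => Finset.univ.inf' Finset.univ_nonempty
        (fun j => ‖x - v j‖ ^ 2 - lam j) := by
      funext x
      rw [Finset.inf'_univ_eq_ciInf]
    rw [this]
    exact Continuous.finset_inf'_apply Finset.univ_nonempty
      (fun j _ => by fun_prop)
  -- integrability of ψ lam
  have hInt : ∀ lam : Fin M → ℝ, Integrable (ψ lam) μhat := by
    intro lam
    refine Integrable.mono' (integrable_const (R + ‖lam‖))
      (hψcont lam).aestronglyMeasurable ?_
    filter_upwards [haeS] with x hx
    rw [Real.norm_eq_abs, abs_le]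
    constructor
    · have := hψ_ge lam x; linarith
    · have h1 := hψ_le lam x ⟨0, hM⟩
      have h2 := hR ⟨0, hM⟩ x hx
      have h3 : lam ⟨0, hM⟩ ≥ -‖lam‖ := by
        have := le_trans (le_abs_self _) (norm_le_pi_norm lam ⟨0, hM⟩)
        have := abs_le.mp ((norm_le_pi_norm lam ⟨0, hM⟩).trans_eq' (Real.norm_eq_abs _).symm)
        linarith [this.1]
      linarith
  -- key upper bound: for sum-zero lam, H lam ≤ R - (max lam)/2
  have hKey : ∀ lam : Fin M → ℝ, ∑ j, lam j = 0 →
      ∀ j0 : Fin M, (∀ j, lam j ≤ lam j0) → H lam ≤ R - lam j0 / 2 := by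
    intro lam hsum j0 hmax
    have hint : (∫ x, ψ lam x ∂μhat) ≤ R - lam j0 := by
      have hb : ∀ᵐ x ∂μhat, ψ lam x ≤ R - lam j0 := by
        filter_upwards [haeS] with x hx
        have := hψ_le lam x j0
        have := hR j0 x hx
        linarith
      calc (∫ x, ψ lam x ∂μhat) ≤ ∫ _, (R - lam j0) ∂μhat :=
            integral_mono_ae (hInt lam) (integrable_const _) hb
        _ = R - lam j0 := by simp
    have hlin : ∑ j, qhat j * lam j ≤ lam j0 / 2 := by
      have h1 : ∀ j, qhat j * (lam j - lam j0) ≤ (1 / (2 * (M : ℝ))) * (lam j - lam j0) := by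
        intro j
        exact mul_le_mul_of_nonpos_right (hq j) (by linarith [hmax j])
      have h2 : ∑ j, qhat j * (lam j - lam j0) ≤
          ∑ j, (1 / (2 * (M : ℝ))) * (lam j - lam j0) :=
        Finset.sum_le_sum fun j _ => h1 j
      have hMpos : (0 : ℝ) < M := Nat.cast_pos.mpr hM
      have h3 : ∑ j, (1 / (2 * (M : ℝ))) * (lam j - lam j0) = -lam j0 / 2 := by
        rw [← Finset.mul_sum, Finset.sum_sub_distrib, hsum]
        simp [Finset.card_univ]
        field_simp
      have h4 : ∑ j, qhat j * (lam j - lam j0) =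
          (∑ j, qhat j * lam j) - lam j0 := by
        simp only [mul_sub]
        rw [Finset.sum_sub_distrib, ← Finset.sum_mul, hqsum, one_mul]
      linarith [h2.trans_eq h3, h4]
    rw [hH]
    linarith
  -- H 0 ≥ 0
  have hH0 : 0 ≤ H 0 := by
    rw [hH]
    have h1 : 0 ≤ ∫ x, (⨅ j, (‖x - v j‖ ^ 2 - (0 : Fin M → ℝ) j)) ∂μhat := by
      refine integral_nonneg fun x => le_ciInf fun j => by simp [sq_nonneg]
    have h2 : ∑ j, qhat j * (0 : Fin M → ℝ) j = 0 := by simp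
    linarith
  -- first conjunct
  have hbox : ∀ lam : Fin M → ℝ, ∑ j, lam j = 0 → H 0 ≤ H lam →
      (∀ j, lam j ≤ 2 * R) ∧ ∀ j, -(2 * ((M : ℝ) - 1) * R) ≤ lam j := by
    intro lam hsum hle
    obtain ⟨j0, _, hmax⟩ := Finset.exists_max_image Finset.univ lam Finset.univ_nonempty
    have hkey := hKey lam hsum j0 fun j => hmax j (Finset.mem_univ j)
    have hmaxle : lam j0 ≤ 2 * R := by linarith
    have hub : ∀ j, lam j ≤ 2 * R := fun j =>
      le_trans (hmax j (Finset.mem_univ j)) hmaxle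
    refine ⟨hub, fun j => ?_⟩
    have hsum' : lam j = -∑ i ∈ Finset.univ.erase j, lam i := by
      have := Finset.add_sum_erase Finset.univ lam (Finset.mem_univ j)
      rw [hsum] at this
      linarith
    have hbound : ∑ i ∈ Finset.univ.erase j, lam i ≤ 2 * ((M : ℝ) - 1) * R := by
      calc ∑ i ∈ Finset.univ.erase j, lam i
          ≤ ∑ _i ∈ Finset.univ.erase j, (2 * R) :=
            Finset.sum_le_sum fun i _ => hub i
        _ = 2 * ((M : ℝ) - 1) * R := by
            rw [Finset.sum_const, Finset.card_erase_of_mem (Finset.mem_univ j),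
              Finset.card_univ, Fintype.card_fin, nsmul_eq_mul, Nat.cast_sub hM]
            push_cast
            ring
    rw [hsum']
    linarith
  refine ⟨hbox, ?_⟩
  -- continuity of H
  have hHcont : Continuous H := by
    have hHfun : H = fun lam => (∫ x, ψ lam x ∂μhat) + ∑ j, qhat j * lam j := by
      funext lam; exact hH lam
    rw [hHfun]
    refine Continuous.add ?_ (by fun_prop)
    -- Lipschitz G
    have hlip : LipschitzWith 1 (fun lam => ∫ x, ψ lam x ∂μhat) := by
      apply LipschitzWith.of_dist_le_mul
      intro a b
      rw [NNReal.coe_one, one_mul, Real.dist_eq, abs_le]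
      have hmain : ∀ a b : Fin M → ℝ,
          (∫ x, ψ a x ∂μhat) - (∫ x, ψ b x ∂μhat) ≤ dist a b := by
        intro a b
        have hpt : ∀ x, ψ a x ≤ ψ b x + dist a b := by
          intro x
          have : ψ a x - dist a b ≤ ψ b x := by
            refine le_ciInf fun j => ?_
            have h1 := hψ_le a x j
            have h2 : |a j - b j| ≤ dist a b := by
              rw [dist_eq_norm]
              calc |a j - b j| = ‖(a - b) j‖ := by simp [Real.norm_eq_abs]
                _ ≤ ‖a - b‖ := norm_le_pi_norm _ j
            have := abs_le.mp h2
            linarith [this.1, this.2]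
          linarith
        have : (∫ x, ψ a x ∂μhat) ≤ ∫ x, (ψ b x + dist a b) ∂μhat :=
          integral_mono (hInt a) ((hInt b).add (integrable_const _)) hpt
        rw [integral_add (hInt b) (integrable_const _)] at this
        simp at this
        linarith
      constructor
      · have := hmain b a; rw [dist_comm] at this; linarith
      · exact hmain a b
    exact hlip.continuous
  -- the compact candidate set
  set K : Set (Fin M → ℝ) :=
    {lam | (∑ j, lam j = 0) ∧ ∀ j, lam j ∈ Set.Icc (-(2 * ((M : ℝ) - 1) * R)) (2 * R)}
    with hK
  have hKcompact : IsCompact K := by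
    have h1 : K = {lam : Fin M → ℝ | ∑ j, lam j = 0} ∩
        Set.pi Set.univ (fun _ => Set.Icc (-(2 * ((M : ℝ) - 1) * R)) (2 * R)) := by
      ext lam
      simp only [hK, Set.mem_setOf_eq, Set.mem_inter_iff, Set.mem_univ_pi, Set.mem_Icc]
    rw [h1]
    refine IsCompact.inter_left (isCompact_univ_pi fun _ => isCompact_Icc) ?_
    exact isClosed_eq (by fun_prop) continuous_const
  have h0K : (0 : Fin M → ℝ) ∈ K := by
    constructor
    · simp
    · intro j
      constructor
      · simp
        have h1 : (1 : ℝ) ≤ (M : ℝ) := by exact_mod_cast hM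
        nlinarith
      · simp; linarith
  obtain ⟨lam0, hlam0K, hlam0max⟩ :=
    hKcompact.exists_isMaxOn ⟨0, h0K⟩ hHcont.continuousOn
  refine ⟨lam0, hlam0K.1, fun j => ⟨(hlam0K.2 j).2, (hlam0K.2 j).1⟩, ?_⟩
  intro lam hsum
  by_cases hcase : H 0 ≤ H lam
  · obtain ⟨hub, hlb⟩ := hbox lam hsum hcase
    exact hlam0max ⟨hsum, fun j => ⟨hlb j, hub j⟩⟩
  · push_neg at hcase
    exact le_trans hcase.le (hlam0max h0K)
end
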